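/- Let G = ⊕_{n≥0} G_n be a positively graded Noetherian ring with (G_0, 𝔫) local and G = G_0[G_1], let L be a finitely generated graded G-module, and set W = H⁰_{𝔫G}(L). If f ∈ G_1 is G_+-filter regular for L, then fL_{n−1} ∩ W_n = fW_{n−1} for all n ≫ 0. -/

import Mathlib

open Filter

noncomputable section

/-- The length of a module, as the height of `⊤` in the submodule lattice. -/
def mLength (R M : Type*) [CommRing R] [AddCommGroup M] [Module R M] : ℕ∞ :=
  Order.height (⊤ : Submodule R M)

/-- The Krull dimension of a module, via the annihilator. -/
def mDim (R M : Type*) [CommRing R] [AddCommGroup M] [Module R M] : WithBot ℕ∞ :=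
  ringKrullDim (R ⧸ Module.annihilator R M)

/-- `H⁰_I(N)`: elements killed by a power of `I` (0-th local cohomology). -/
def H0 {R : Type*} [CommRing R] (I : Ideal R) (N : Type*) [AddCommGroup N] [Module R N] :
    Submodule R N :=
  ⨆ n : ℕ, Submodule.torsionBySet R N ((I ^ n : Ideal R) : Set R)

/-- The irrelevant ideal `G₊` of a positively graded ring: the ideal generated by the
homogeneous elements of positive degree. -/
def gPlus {R G : Type*} [CommRing R] [CommRing G] [Algebra R G]
    (𝒜 : ℕ → Submodule R G) : Ideal G :=
  Ideal.span {x : G | ∃ n : ℕ, 0 < n ∧ x ∈ 𝒜 n}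

/-- `f` is `G₊`-filter regular for a `G`-module `L`: `f ∉ P` for every associated prime
`P` of `L` with `G₊ ⊄ P`. -/
def FilterRegular {R G : Type*} [CommRing R] [CommRing G] [Algebra R G]
    (𝒜 : ℕ → Submodule R G) (f : G) (L : Type*) [AddCommGroup L] [Module G L] : Prop :=
  ∀ P ∈ associatedPrimes G L, ¬ gPlus 𝒜 ≤ P → f ∉ P

/-- The `j`-multiplicity `j_d(G, L)` of a graded module `L` with components `comp` over a
graded ring `G` with `𝔫G = nG`: the limit of `(d−1)!/n^(d−1) · length_{G₀} Wₙ`, where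
`W = H⁰_{𝔫G}(L)` and `Wₙ` is its `n`-th graded component. -/
def jMultGr (R : Type*) {G : Type*} [CommRing R] [CommRing G] [Algebra R G] (nG : Ideal G)
    (L : Type*) [AddCommGroup L] [Module R L] [Module G L] [IsScalarTower R G L]
    (comp : ℕ → Submodule R L) (d : ℕ) : ℝ :=
  limUnder atTop fun n : ℕ =>
    ((d - 1).factorial : ℝ) / (n : ℝ) ^ (d - 1) *
      ((mLength R (Submodule.restrictScalars R (H0 nG L) ⊓ comp n : Submodule R L)).toNat : ℝ)


theorem mem_H0_iff' {A : Type*} [CommRing A] {M : Type*} [AddCommGroup M] [Module A M]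
    {I : Ideal A} {x : M} :
    x ∈ H0 I M ↔ ∃ k : ℕ, ∀ a ∈ I ^ k, a • x = 0 := by
  have hmono : Monotone (fun n : ℕ => Submodule.torsionBySet A M ((I ^ n : Ideal A) : Set A)) :=
    fun i j hij => Submodule.torsionBySet_le_torsionBySet_of_subset
      (Ideal.pow_le_pow_right hij)
  constructor
  · intro hx
    simp only [H0] at hx
    rw [Submodule.mem_iSup_of_directed _ hmono.directed_le] at hx
    obtain ⟨k, hk⟩ := hx
    rw [Submodule.mem_torsionBySet_iff] at hk
    exact ⟨k, fun a ha => hk ⟨a, ha⟩⟩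
  · rintro ⟨k, hk⟩
    exact le_iSup (fun n : ℕ => Submodule.torsionBySet A M ((I ^ n : Ideal A) : Set A)) k
      ((Submodule.mem_torsionBySet_iff _ _).mpr fun a => hk a a.2)

theorem H0_uniform {A : Type*} [CommRing A] {M : Type*} [AddCommGroup M] [Module A M]
    {I : Ideal A} {N : Submodule A M} (hfg : N.FG) (hN : N ≤ H0 I M) :
    ∃ s : ℕ, ∀ x ∈ N, ∀ a ∈ I ^ s, a • x = 0 := by
  obtain ⟨T, rfl⟩ := hfg
  have hch : ∀ t : M, ∃ kt : ℕ, t ∈ (T : Set M) → ∀ a ∈ I ^ kt, a • t = 0 := by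
    intro t
    by_cases ht : t ∈ (T : Set M)
    · obtain ⟨kt, hkt⟩ := mem_H0_iff'.mp (hN (Submodule.subset_span ht))
      exact ⟨kt, fun _ => hkt⟩
    · exact ⟨0, fun h => absurd h ht⟩
  choose k hk using hch
  refine ⟨T.sup k, fun x hx => ?_⟩
  induction hx using Submodule.span_induction with
  | mem z hz => exact fun a ha => hk z hz a (Ideal.pow_le_pow_right (Finset.le_sup hz) ha)
  | zero => exact fun a _ => smul_zero a
  | add y z _ _ hy hz => exact fun a ha => by rw [smul_add, hy a ha, hz a ha, add_zero]
  | smul c y _ hy => exact fun a ha => by rw [smul_comm, hy a ha, smul_zero]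

theorem ker_le_H0 {R G : Type*} [CommRing R] [CommRing G] [IsNoetherianRing G] [Algebra R G]
    (𝒜 : ℕ → Submodule R G) {L : Type*} [AddCommGroup L] [Module G L] [Module.Finite G L]
    {f : G} (hreg : FilterRegular 𝒜 f L) {x : L} (hfx : f • x = 0) :
    x ∈ H0 (gPlus 𝒜) L := by
  haveI : IsNoetherian G L := isNoetherian_of_isNoetherianRing_of_finite G L
  by_contra hxU
  set U : Submodule G L := H0 (gPlus 𝒜) L with hU
  have hx0 : (Submodule.Quotient.mk x : L ⧸ U) ≠ 0 := by
    simpa [Submodule.Quotient.mk_eq_zero] using hxU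
  obtain ⟨P, hP, hle⟩ :=
    exists_le_isAssociatedPrime_of_isNoetherianRing G (Submodule.Quotient.mk x : L ⧸ U) hx0
  obtain ⟨hprime, ybar, hPy⟩ := isAssociatedPrime_iff.mp hP
  obtain ⟨y, rfl⟩ := Submodule.Quotient.mk_surjective U ybar
  have hfP : f ∈ P := by
    refine hle ?_
    rw [Submodule.mem_colon_singleton, Submodule.mem_bot, ← Submodule.Quotient.mk_smul, hfx,
      Submodule.Quotient.mk_zero]
  have hyU : ∀ a : G, a ∈ P ↔ a • y ∈ U := by
    intro a
    rw [hPy, Submodule.mem_colon_singleton, Submodule.mem_bot, ← Submodule.Quotient.mk_smul,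
      Submodule.Quotient.mk_eq_zero]
  have hGP : ¬ gPlus 𝒜 ≤ P := by
    intro hGP
    have hyU' : y ∈ U := by
      have hN2 : gPlus 𝒜 • (G ∙ y) ≤ U := by
        rw [Submodule.smul_le]
        intro g hg z hz
        obtain ⟨c, rfl⟩ := Submodule.mem_span_singleton.mp hz
        rw [smul_comm]
        exact U.smul_mem c ((hyU g).mp (hGP hg))
      obtain ⟨s, hs⟩ := H0_uniform (IsNoetherian.noetherian _) hN2
      rw [hU, mem_H0_iff']
      refine ⟨s + 1, fun a ha => ?_⟩
      have hmem : a • y ∈ (gPlus 𝒜 ^ (s + 1) • (G ∙ y) : Submodule G L) :=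
        Submodule.smul_mem_smul ha (Submodule.mem_span_singleton_self y)
      have heq : (gPlus 𝒜 ^ (s + 1) • (G ∙ y) : Submodule G L) = ⊥ := by
        rw [pow_succ, ← Ideal.smul_eq_mul, Submodule.smul_assoc]
        rw [eq_bot_iff, Submodule.smul_le]
        intro b hb z hz
        exact (Submodule.mem_bot G).mpr (hs z hz b hb)
      rw [heq] at hmem
      exact (Submodule.mem_bot G).mp hmem
    have h0 : Submodule.Quotient.mk y = (0 : L ⧸ U) :=
      (Submodule.Quotient.mk_eq_zero U).mpr hyU'
    rw [h0] at hPy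
    exact hprime.ne_top (by rw [hPy, eq_top_iff]; intro a _; rw [Submodule.mem_colon_singleton, smul_zero]; exact Submodule.zero_mem _)
  obtain ⟨g₀, hg₀G, hg₀P⟩ := SetLike.not_le_iff_exists.mp hGP
  obtain ⟨s, hs⟩ := H0_uniform (IsNoetherian.noetherian ((G ∙ y) ⊓ U)) inf_le_right
  have hgs : g₀ ^ s ∉ P := fun h => hg₀P (hprime.mem_of_pow_mem s h)
  have hPL : P ∈ associatedPrimes G L := by
    refine isAssociatedPrime_iff.mpr ⟨hprime, g₀ ^ s • y, ?_⟩
    ext a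
    rw [hPy, Submodule.mem_colon_singleton, Submodule.mem_bot, Submodule.mem_colon_singleton, Submodule.mem_bot]
    constructor
    · intro ha
      have h1 : a • y ∈ (G ∙ y) ⊓ U := by
        refine ⟨Submodule.smul_mem _ a (Submodule.mem_span_singleton_self y), ?_⟩
        rwa [← Submodule.Quotient.mk_smul, Submodule.Quotient.mk_eq_zero] at ha
      have h2 : g₀ ^ s • a • y = 0 := hs _ h1 _ (Ideal.pow_mem_pow hg₀G s)
      rwa [smul_comm] at h2
    · intro ha
      have h2 : (a * g₀ ^ s) • Submodule.Quotient.mk y = (0 : L ⧸ U) := by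
        rw [← Submodule.Quotient.mk_smul, mul_smul, ha, Submodule.Quotient.mk_zero]
      have h3 : a * g₀ ^ s ∈ P := by
        rwa [hPy, Submodule.mem_colon_singleton, Submodule.mem_bot]
      have h4 : a ∈ P := (hprime.mem_or_mem h3).resolve_right hgs
      rwa [hPy, Submodule.mem_colon_singleton, Submodule.mem_bot] at h4
  exact hreg P hPL hGP hfP

theorem decompose_smul_homog {R G : Type*} [CommRing R] [CommRing G] [Algebra R G]
    (𝒜 : ℕ → Submodule R G) {L : Type*} [AddCommGroup L] [Module R L] [Module G L]
    [IsScalarTower R G L] (ℳ : ℕ → Submodule R L) [DirectSum.Decomposition 𝒜]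
    [DirectSum.Decomposition ℳ] [SetLike.GradedSMul 𝒜 ℳ]
    (c : G) {z : L} {d m : ℕ} (hz : z ∈ ℳ d) (hdm : d ≤ m) :
    (DirectSum.decompose ℳ (c • z) m : L) = (DirectSum.decompose 𝒜 c (m - d) : G) • z := by
  induction c using DirectSum.Decomposition.inductionOn 𝒜 with
  | zero => simp
  | @homogeneous e ce =>
      have hmem : (ce : G) • z ∈ ℳ (e + d) := SetLike.GradedSMul.smul_mem ce.2 hz
      by_cases he : e = m - d
      · subst he
        rw [Nat.sub_add_cancel hdm] at hmem
        rw [DirectSum.decompose_of_mem_same ℳ hmem,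
          DirectSum.decompose_of_mem_same 𝒜 ce.2]
      · rw [DirectSum.decompose_of_mem_ne ℳ hmem (by omega),
          DirectSum.decompose_of_mem_ne 𝒜 ce.2 he, zero_smul]
  | add c₁ c₂ h₁ h₂ =>
      rw [add_smul, DirectSum.decompose_add, DirectSum.add_apply, Submodule.coe_add, h₁, h₂,
        DirectSum.decompose_add, DirectSum.add_apply, Submodule.coe_add, add_smul]

theorem grade_le_pow_gPlus {R G : Type*} [CommRing R] [CommRing G] [Algebra R G]
    (𝒜 : ℕ → Submodule R G) (hstd : ∀ n : ℕ, 𝒜 n = 𝒜 1 ^ n)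
    {s e : ℕ} (hse : s ≤ e) {a : G} (ha : a ∈ 𝒜 e) : a ∈ gPlus 𝒜 ^ s := by
  have aux : ∀ e' : ℕ, ∀ a : G, a ∈ 𝒜 (e' + 1) → a ∈ gPlus 𝒜 ^ (e' + 1) := by
    intro e'
    induction e' with
    | zero =>
        intro a ha
        rw [pow_one]
        exact Ideal.subset_span ⟨1, one_pos, ha⟩
    | succ e'' ih =>
        intro a ha
        rw [hstd, pow_succ] at ha
        refine Submodule.mul_induction_on ha ?_ ?_
        · intro x hx y hy
          have hx' : x ∈ gPlus 𝒜 ^ (e'' + 1) := ih x (by rw [hstd]; exact hx)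
          have hy' : y ∈ gPlus 𝒜 := Ideal.subset_span ⟨1, one_pos, hy⟩
          rw [show e'' + 1 + 1 = (e'' + 1) + 1 from rfl, pow_succ]
          exact Ideal.mul_mem_mul hx' hy'
        · intro x y hx hy; exact Ideal.add_mem _ hx hy
  rcases Nat.eq_zero_or_pos s with hs | hs
  · subst hs; simp [Ideal.one_eq_top]
  · obtain ⟨e', rfl⟩ : ∃ e', e = e' + 1 := ⟨e - 1, by omega⟩
    exact Ideal.pow_le_pow_right hse (aux e' a ha)

theorem vanish {R G : Type*} [CommRing R] [CommRing G] [IsNoetherianRing G] [Algebra R G]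
    (𝒜 : ℕ → Submodule R G) [GradedAlgebra 𝒜] (hstd : ∀ n : ℕ, 𝒜 n = 𝒜 1 ^ n)
    (L : Type*) [AddCommGroup L] [Module R L] [Module G L] [IsScalarTower R G L]
    [Module.Finite G L]
    (ℳ : ℕ → Submodule R L) [DirectSum.Decomposition ℳ] [SetLike.GradedSMul 𝒜 ℳ]
    (f : G) (hreg : FilterRegular 𝒜 f L) :
    ∃ N : ℕ, ∀ m : ℕ, N ≤ m → ∀ x : L, f • x = 0 → x ∈ ℳ m → x = 0 := by
  classical
  haveI : IsNoetherian G L := isNoetherian_of_isNoetherianRing_of_finite G L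
  set K : Submodule G L := LinearMap.ker (LinearMap.lsmul G L f) with hK
  have hKU : K ≤ H0 (gPlus 𝒜) L := by
    intro z hz
    exact ker_le_H0 𝒜 hreg (by simpa [hK, LinearMap.mem_ker] using hz)
  obtain ⟨s, hs⟩ := H0_uniform (IsNoetherian.noetherian K) hKU
  set A : ℕ →o Submodule G L :=
    ⟨fun n => Submodule.span G (⋃ j ∈ Set.Iic n, ((K : Set L) ∩ (ℳ j : Set L))),
      fun i j hij => Submodule.span_mono (Set.biUnion_mono
        (fun k hk => Set.mem_Iic.mpr (le_trans (Set.mem_Iic.mp hk) hij))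
        (fun _ _ => subset_rfl))⟩ with hA
  obtain ⟨n₀, hn₀⟩ := monotone_stabilizes_iff_noetherian.mpr ‹IsNoetherian G L› A
  refine ⟨n₀ + s, fun m hm x hfx hxm => ?_⟩
  have hxK : x ∈ K := by simpa [hK, LinearMap.mem_ker] using hfx
  have hxA : x ∈ A n₀ := by
    rw [hn₀ m (by omega)]
    exact Submodule.subset_span (Set.mem_biUnion (Set.mem_Iic.mpr le_rfl) ⟨hxK, hxm⟩)
  rw [hA] at hxA
  change x ∈ Submodule.span G _ at hxA
  rw [Submodule.mem_span_set] at hxA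
  obtain ⟨l, hlsupp, hlsum⟩ := hxA
  have hx' : x = (DirectSum.decompose ℳ x m : L) := (DirectSum.decompose_of_mem_same ℳ hxm).symm
  rw [hx', ← hlsum, Finsupp.sum]
  rw [DirectSum.decompose_sum, DFinsupp.finset_sum_apply, AddSubmonoidClass.coe_finset_sum]
  refine Finset.sum_eq_zero ?_
  intro z hz
  obtain ⟨j, hj, hzK, hzj⟩ : ∃ j, j ≤ n₀ ∧ z ∈ K ∧ z ∈ ℳ j := by
    have hmem := hlsupp hz
    simp only [Set.mem_iUnion, Set.mem_inter_iff, Set.mem_Iic, SetLike.mem_coe] at hmem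
    obtain ⟨j, hj, h1, h2⟩ := hmem
    exact ⟨j, hj, h1, h2⟩
  rw [decompose_smul_homog 𝒜 ℳ (l z) hzj (by omega)]
  exact hs z hzK _ (grade_le_pow_gPlus 𝒜 hstd (by omega) (SetLike.coe_mem _))

/-- Lemma 2.2 (ii): if `f ∈ G₁` is `G₊`-filter regular for `L`, then
`fL_{n-1} ∩ W_n = fW_{n-1}` for all `n ≫ 0`, where `W = H⁰_{𝔫G}(L)` and
`W_n = W ∩ L_n`. -/
theorem stmt_2 {R G : Type*} [CommRing R] [IsNoetherianRing R] [IsLocalRing R]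
    [CommRing G] [IsNoetherianRing G] [Algebra R G]
    (𝒜 : ℕ → Submodule R G) [GradedAlgebra 𝒜]
    (hstd : ∀ n : ℕ, 𝒜 n = 𝒜 1 ^ n)
    (L : Type*) [AddCommGroup L] [Module R L] [Module G L] [IsScalarTower R G L]
    [Module.Finite G L]
    (ℳ : ℕ → Submodule R L) [DirectSum.Decomposition ℳ] [SetLike.GradedSMul 𝒜 ℳ]
    (f : G) (hf1 : f ∈ 𝒜 1)
    (hreg : FilterRegular 𝒜 f L) :
    ∃ N : ℕ, ∀ n ≥ N,
      Submodule.map ((LinearMap.lsmul G L f).restrictScalars R) (ℳ n) ⊓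
          (Submodule.restrictScalars R
            (H0 (Ideal.map (algebraMap R G) (IsLocalRing.maximalIdeal R)) L) ⊓ ℳ (n + 1)) =
        Submodule.map ((LinearMap.lsmul G L f).restrictScalars R)
          (Submodule.restrictScalars R
            (H0 (Ideal.map (algebraMap R G) (IsLocalRing.maximalIdeal R)) L) ⊓ ℳ n) := by
  classical
  obtain ⟨N, hN⟩ := vanish 𝒜 hstd L ℳ f hreg
  set nG : Ideal G := Ideal.map (algebraMap R G) (IsLocalRing.maximalIdeal R) with hnG
  set W : Submodule G L := H0 nG L with hW
  refine ⟨N, fun n hn => ?_⟩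
  apply le_antisymm
  · rintro x ⟨hmap, hxW, hxM⟩
    obtain ⟨y, hyn, hyx⟩ := hmap
    have hyx' : f • y = x := by simpa using hyx
    have hxW' : x ∈ W := hxW
    obtain ⟨k, hk⟩ := mem_H0_iff'.mp hxW'
    have hhom : (nG ^ k).IsHomogeneous 𝒜 := by
      rw [hnG, ← Ideal.map_pow]
      refine Ideal.homogeneous_span 𝒜 _ ?_
      rintro g ⟨r, -, rfl⟩
      exact ⟨0, SetLike.algebraMap_mem_graded 𝒜 r⟩
    have hyW : y ∈ W := by
      rw [hW, mem_H0_iff']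
      refine ⟨k, fun a ha => ?_⟩
      have hcomp : ∀ e : ℕ, (DirectSum.decompose 𝒜 a e : G) • y = 0 := by
        intro e
        have hae : (DirectSum.decompose 𝒜 a e : G) ∈ nG ^ k := hhom e ha
        have h1 : f • ((DirectSum.decompose 𝒜 a e : G) • y) = 0 := by
          rw [smul_comm, hyx']
          exact hk _ hae
        have h2 : (DirectSum.decompose 𝒜 a e : G) • y ∈ ℳ (e + n) :=
          SetLike.GradedSMul.smul_mem (SetLike.coe_mem (DirectSum.decompose 𝒜 a e)) hyn
        exact hN (e + n) (by omega) _ h1 h2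
      conv_lhs => rw [← DirectSum.sum_support_decompose 𝒜 a]
      rw [Finset.sum_smul]
      exact Finset.sum_eq_zero fun e _ => hcomp e
    exact ⟨y, ⟨hyW, hyn⟩, hyx⟩
  · rintro x ⟨y, ⟨hyW, hyn⟩, rfl⟩
    have hyW' : y ∈ W := hyW
    refine ⟨⟨y, hyn, rfl⟩, ?_, ?_⟩
    · show ((LinearMap.lsmul G L f).restrictScalars R) y ∈ W
      simpa using W.smul_mem f hyW'
    · show ((LinearMap.lsmul G L f).restrictScalars R) y ∈ ℳ (n + 1)
      have h := SetLike.GradedSMul.smul_mem hf1 hyn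
      simpa [Nat.add_comm] using h
end
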